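/- Let H be a Hermitian operator on a finite-dimensional complex Hilbert space and let ρ be a positive semidefinite operator. Define the ergotropy W_max(ρ) = max over unitaries U of tr(ρH) - tr(UρU†H). Then W_max is concave: for any states ρ₁, ρ₂ and s ∈ [0,1], W_max(sρ₁ + (1-s)ρ₂) ≤ s·W_max(ρ₁) + (1-s)·W_max(ρ₂). -/

import Mathlib

open Matrix ComplexOrder

/-- The work extracted from state `ρ` (w.r.t. Hamiltonian `H`) by the unitary `U`:
`W(ρ,U) = tr(ρH) - tr(UρU†H)`. -/
noncomputable def extractedWork {n : Type*} [Fintype n] [DecidableEq n]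
    (H ρ U : Matrix n n ℂ) : ℝ :=
  ((ρ * H).trace - (U * ρ * Uᴴ * H).trace).re

/-- The ergotropy `W_max(ρ)`: the maximal extracted work over all unitaries. -/
noncomputable def ergotropy {n : Type*} [Fintype n] [DecidableEq n]
    (H ρ : Matrix n n ℂ) : ℝ :=
  ⨆ U : Matrix.unitaryGroup n ℂ, extractedWork H ρ (U : Matrix n n ℂ)

/-- Every entry of a unitary matrix has absolute value at most 1. -/
lemma entry_abs_le_one {n : Type*} [Fintype n] [DecidableEq n]
    {U : Matrix n n ℂ} (hU : U ∈ Matrix.unitaryGroup n ℂ) (i j : n) :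
    ‖U i j‖ ≤ 1 := by
  have h2 : U * Uᴴ = 1 := hU.2
  have hdiag : ∑ k, U i k * (starRingEnd ℂ) (U i k) = 1 := by
    have := congrFun (congrFun h2 i) i
    simpa [Matrix.mul_apply, Matrix.conjTranspose_apply, Matrix.one_apply] using this
  have hsum : ∑ k, (‖U i k‖)^2 = 1 := by
    have : ((∑ k, (‖U i k‖ : ℂ)^2) : ℂ) = 1 := by
      rw [← hdiag]
      congr 1; ext k
      rw [Complex.mul_conj, ← Complex.sq_norm]
      push_cast; ring
    exact_mod_cast this
  have h1 : (‖U i j‖)^2 ≤ 1 := by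
    rw [← hsum]
    exact Finset.single_le_sum (f := fun k => (‖U i k‖)^2)
      (fun k _ => sq_nonneg _) (Finset.mem_univ j)
  nlinarith [norm_nonneg (U i j)]

lemma abs_mul_apply {n : Type*} [Fintype n] (A B : Matrix n n ℂ) (i l : n) :
    ‖(A * B) i l‖ ≤ ∑ k, ‖A i k‖ * ‖B k l‖ := by
  rw [Matrix.mul_apply]
  simpa [_root_.map_mul] using norm_sum_le Finset.univ fun k => A i k * B k l

/-- The extracted work is bounded above over all unitaries. -/
lemma bddAbove_extractedWork {n : Type*} [Fintype n] [DecidableEq n]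
    (H ρ : Matrix n n ℂ) :
    BddAbove (Set.range fun U : Matrix.unitaryGroup n ℂ =>
      extractedWork H ρ (U : Matrix n n ℂ)) := by
  refine ⟨((ρ * H).trace).re +
    ∑ i : n, ∑ l : n, (∑ k : n, ∑ j : n, ‖ρ j k‖) * ‖H l i‖, ?_⟩
  rintro x ⟨U, rfl⟩
  have hentry : ∀ i j : n, ‖(U : Matrix n n ℂ) i j‖ ≤ 1 :=
    fun i j => entry_abs_le_one U.2 i j
  set V : Matrix n n ℂ := (U : Matrix n n ℂ)
  have habs : ‖(V * ρ * Vᴴ * H).trace‖ ≤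
      ∑ i : n, ∑ l : n, (∑ k : n, ∑ j : n, ‖ρ j k‖) * ‖H l i‖ := by
    calc ‖(V * ρ * Vᴴ * H).trace‖
        ≤ ∑ i : n, ‖(V * ρ * Vᴴ * H) i i‖ := by
          simpa [Matrix.trace, Matrix.diag] using
            norm_sum_le Finset.univ fun i => (V * ρ * Vᴴ * H) i i
      _ ≤ ∑ i : n, ∑ l : n, ‖(V * ρ * Vᴴ) i l‖ * ‖H l i‖ :=
          Finset.sum_le_sum fun i _ => abs_mul_apply _ _ i i
      _ ≤ ∑ i : n, ∑ l : n, (∑ k : n, ∑ j : n, ‖ρ j k‖) * ‖H l i‖ := by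
          refine Finset.sum_le_sum fun i _ => Finset.sum_le_sum fun l _ =>
            mul_le_mul_of_nonneg_right ?_ (norm_nonneg _)
          calc ‖(V * ρ * Vᴴ) i l‖
              ≤ ∑ k : n, ‖(V * ρ) i k‖ * ‖Vᴴ k l‖ :=
                abs_mul_apply _ _ i l
            _ ≤ ∑ k : n, ‖(V * ρ) i k‖ * 1 := by
                refine Finset.sum_le_sum fun k _ => mul_le_mul_of_nonneg_left ?_
                  (norm_nonneg _)
                simpa [Matrix.conjTranspose_apply] using hentry l k
            _ = ∑ k : n, ‖(V * ρ) i k‖ := by simp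
            _ ≤ ∑ k : n, ∑ j : n, ‖ρ j k‖ := by
                refine Finset.sum_le_sum fun k _ => (abs_mul_apply V ρ i k).trans ?_
                refine Finset.sum_le_sum fun j _ => ?_
                calc ‖V i j‖ * ‖ρ j k‖
                    ≤ 1 * ‖ρ j k‖ :=
                      mul_le_mul_of_nonneg_right (hentry i j) (norm_nonneg _)
                  _ = ‖ρ j k‖ := one_mul _
  have hre : -((V * ρ * Vᴴ * H).trace).re ≤ ‖(V * ρ * Vᴴ * H).trace‖ := by
    have := Complex.abs_re_le_norm ((V * ρ * Vᴴ * H).trace)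
    rw [abs_le] at this
    linarith
  show ((ρ * H).trace - (V * ρ * Vᴴ * H).trace).re ≤ _
  rw [Complex.sub_re]
  linarith

/-- the ergotropy is concave in the state. -/
theorem ergotropy_concave {n : Type*} [Fintype n] [DecidableEq n]
    (H : Matrix n n ℂ) (hH : H.IsHermitian)
    (ρ₁ ρ₂ : Matrix n n ℂ) (hρ₁ : ρ₁.PosSemidef) (hρ₂ : ρ₂.PosSemidef)
    (s : ℝ) (hs₀ : 0 ≤ s) (hs₁ : s ≤ 1) :
    ergotropy H (s • ρ₁ + (1 - s) • ρ₂) ≤ s * ergotropy H ρ₁ + (1 - s) * ergotropy H ρ₂ := by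
  have hne : Nonempty (Matrix.unitaryGroup n ℂ) := ⟨1⟩
  refine ciSup_le fun U => ?_
  have lin : extractedWork H (s • ρ₁ + (1 - s) • ρ₂) (U : Matrix n n ℂ)
      = s * extractedWork H ρ₁ (U : Matrix n n ℂ)
        + (1 - s) * extractedWork H ρ₂ (U : Matrix n n ℂ) := by
    unfold extractedWork
    simp only [Matrix.add_mul, Matrix.smul_mul, Matrix.mul_add, Matrix.mul_smul,
      Matrix.trace_add, Matrix.trace_smul, Complex.add_re, Complex.sub_re,
      Complex.smul_re, smul_eq_mul]
    ring
  rw [lin]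
  exact add_le_add
    (mul_le_mul_of_nonneg_left (le_ciSup (bddAbove_extractedWork H ρ₁) U) hs₀)
    (mul_le_mul_of_nonneg_left (le_ciSup (bddAbove_extractedWork H ρ₂) U) (by linarith))
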